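/- There exists an absolute constant C₀ > 0 such that for every R > 0 and every u : ℝ³ → ℝ continuously differentiable on a neighborhood of the closed ball B̄_R(0) one has ∫_{B_R} |u(x)|²/|x|² dx ≤ C₀ ( ∫_{B_R} |u_r|² dx + ( ∫_{B_R} |u|⁶ dx )^{1/3} ), where u_r(x) = (x/|x|)·∇u(x) is the radial derivative of u. -/

import Mathlib

open MeasureTheory Filter Set

noncomputable section

/-- Euclidean 3-space. -/
abbrev E3 := EuclideanSpace ℝ (Fin 3)

/-- Radial derivative `u_r(x) = (x/|x|)·∇u(x)` of `u : ℝ³ → ℝ`. -/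
noncomputable def radialDeriv (u : E3 → ℝ) (x : E3) : ℝ :=
  inner ℝ ((‖x‖)⁻¹ • x) (gradient u x)

namespace Statement4Aux

lemma cube_amgm {a b : ℝ} (ha : 0 ≤ a) (hb : 0 ≤ b) : 3 * a * b ^ 2 ≤ a ^ 3 + 2 * b ^ 3 := by
  nlinarith [sq_nonneg (a - b), mul_nonneg ha hb, sq_nonneg (a + b)]

lemma rpow_cube {K : ℝ} (hK : 0 ≤ K) : (K ^ ((1:ℝ)/3)) ^ 3 = K := by
  rw [← Real.rpow_natCast (K ^ ((1:ℝ)/3)) 3, ← Real.rpow_mul hK]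
  norm_num

lemma rpow_third_le {K l : ℝ} (hK : 0 ≤ K) (hl : 0 < l) :
    K ^ ((1:ℝ)/3) ≤ K / (3 * l ^ 2) + 2 * l / 3 := by
  have h := cube_amgm (Real.rpow_nonneg hK ((1:ℝ)/3)) hl.le
  rw [rpow_cube hK] at h
  rw [← mul_le_mul_iff_of_pos_right (show (0:ℝ) < 3 * l ^ 2 by positivity)]
  have he : (K / (3 * l ^ 2) + 2 * l / 3) * (3 * l ^ 2) = K + 2 * l ^ 3 := by
    field_simp
  rw [he]
  nlinarith [h]

lemma opt {X D c : ℝ} (hD : 0 ≤ D) (hc : 0 ≤ c)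
    (h : ∀ l : ℝ, 0 < l → X ≤ D / (3 * l ^ 2) + c * (2 * l / 3)) :
    X ≤ max 1 c * D ^ ((1:ℝ)/3) := by
  rcases eq_or_lt_of_le hD with hD0 | hD0
  · have hX : X ≤ 0 := by
      refine le_of_forall_pos_le_add (fun ε hε => ?_)
      have hl : (0:ℝ) < 3 * ε / (2 * (c + 1)) := by positivity
      have h1 := h _ hl
      rw [← hD0, zero_div, zero_add] at h1
      have h2 : c * (2 * (3 * ε / (2 * (c + 1))) / 3) = c * ε / (c + 1) := by
        field_simp
      rw [h2] at h1
      have h3 : c * ε / (c + 1) ≤ ε := by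
        rw [div_le_iff₀ (by positivity)]
        nlinarith
      linarith
    have : (0:ℝ) ≤ max 1 c * D ^ ((1:ℝ)/3) := by positivity
    linarith
  · have hl := h (D ^ ((1:ℝ)/3)) (Real.rpow_pos_of_pos hD0 _)
    have hd3 : (D ^ ((1:ℝ)/3)) ^ 3 = D := rpow_cube hD0.le
    have hdpos : 0 < D ^ ((1:ℝ)/3) := Real.rpow_pos_of_pos hD0 _
    have he : D / (3 * (D ^ ((1:ℝ)/3)) ^ 2) = D ^ ((1:ℝ)/3) / 3 := by
      rw [div_eq_div_iff (by positivity) (by norm_num)]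
      nlinarith [hd3]
    rw [he] at hl
    have hmax : (1 + 2 * c) / 3 ≤ max 1 c := by
      rcases le_total c 1 with hc1 | hc1
      · rw [max_eq_left hc1]; linarith
      · rw [max_eq_right hc1]; linarith
    nlinarith [hdpos]

lemma oneD {R : ℝ} (hR : 0 < R) {f f' : ℝ → ℝ}
    (hd : ∀ r ∈ Icc (0:ℝ) R, HasDerivAt f (f' r) r)
    (hc : ContinuousOn f' (Icc 0 R)) :
    ∫ r in (0:ℝ)..R, (f r) ^ 2 ≤
      8 * (∫ r in (0:ℝ)..R, r ^ 2 * (f' r) ^ 2) +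
        8 * (∫ r in (0:ℝ)..R, r ^ 2 * (f r) ^ 6) ^ ((1:ℝ)/3) := by
  have hfc : ContinuousOn f (Icc 0 R) := fun r hr => (hd r hr).continuousAt.continuousWithinAt
  have hR2 : (0:ℝ) ≤ R / 2 := by linarith
  have hhalf : R / 2 ≤ R := by linarith
  have hii : ∀ (g : ℝ → ℝ), ContinuousOn g (Icc 0 R) → ∀ a b : ℝ, 0 ≤ a → b ≤ R → a ≤ b →
      IntervalIntegrable g volume a b := by
    intro g hg a b ha hb hab
    exact (hg.mono (Icc_subset_Icc ha hb)).intervalIntegrable_of_Icc hab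
  have hCsq : ContinuousOn (fun r => (f r) ^ 2) (Icc 0 R) := hfc.pow 2
  have hCD : ContinuousOn (fun r => r ^ 2 * (f' r) ^ 2) (Icc 0 R) :=
    (continuousOn_id.pow 2).mul (hc.pow 2)
  have hCK : ContinuousOn (fun r => r ^ 2 * (f r) ^ 6) (Icc 0 R) :=
    (continuousOn_id.pow 2).mul (hfc.pow 6)
  have hCff' : ContinuousOn (fun r => r * (2 * f r * f' r)) (Icc 0 R) :=
    continuousOn_id.mul ((continuousOn_const.mul hfc).mul hc)
  set I : ℝ := ∫ r in (0:ℝ)..R, (f r) ^ 2 with hI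
  set D0 : ℝ := ∫ r in (0:ℝ)..R, r ^ 2 * (f' r) ^ 2 with hD0
  set K : ℝ := ∫ r in (0:ℝ)..R, r ^ 2 * (f r) ^ 6 with hKdef
  set I2 : ℝ := ∫ r in (R/2)..R, (f r) ^ 2 with hI2
  have hK0 : 0 ≤ K := intervalIntegral.integral_nonneg hR.le (fun x hx => by positivity)
  have hD00 : 0 ≤ D0 := intervalIntegral.integral_nonneg hR.le (fun x hx => by positivity)
  have hI20 : 0 ≤ I2 := intervalIntegral.integral_nonneg hhalf (fun x hx => by positivity)
  -- Step 1: integration by parts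
  have hIBP : (∫ r in (0:ℝ)..R, ((f r) ^ 2 + r * (2 * f r * f' r))) = R * (f R) ^ 2 := by
    have hder : ∀ x ∈ uIcc (0:ℝ) R,
        HasDerivAt (fun r => r * (f r) ^ 2) ((f x) ^ 2 + x * (2 * f x * f' x)) x := by
      intro x hx
      rw [uIcc_of_le hR.le] at hx
      have h1 : HasDerivAt (fun r => (f r) ^ 2) (2 * f x * f' x) x := by
        have h0 := (hd x hx).pow 2
        norm_num at h0
        exact h0
      have h2 := (hasDerivAt_id x).mul h1
      exact h2.congr_deriv (by simp)
    have hint : IntervalIntegrable (fun r => (f r) ^ 2 + r * (2 * f r * f' r)) volume 0 R :=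
      hii _ (hCsq.add hCff') 0 R le_rfl le_rfl hR.le
    rw [intervalIntegral.integral_eq_sub_of_hasDerivAt hder hint]
    ring
  have hsplit : I + (∫ r in (0:ℝ)..R, r * (2 * f r * f' r)) = R * (f R) ^ 2 := by
    rw [hI, ← intervalIntegral.integral_add (hii _ hCsq 0 R le_rfl le_rfl hR.le)
      (hii _ hCff' 0 R le_rfl le_rfl hR.le)]
    exact hIBP
  have hbound1 : -(∫ r in (0:ℝ)..R, r * (2 * f r * f' r)) ≤ (1/2) * I + 2 * D0 := by
    rw [← intervalIntegral.integral_neg]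
    calc (∫ r in (0:ℝ)..R, -(r * (2 * f r * f' r)))
        ≤ ∫ r in (0:ℝ)..R, ((1/2) * (f r) ^ 2 + 2 * (r ^ 2 * (f' r) ^ 2)) := by
          refine intervalIntegral.integral_mono_on hR.le
            ((hii _ hCff' 0 R le_rfl le_rfl hR.le).neg)
            (((hii _ hCsq 0 R le_rfl le_rfl hR.le).const_mul (1/2)).add
              ((hii _ hCD 0 R le_rfl le_rfl hR.le).const_mul 2))
            (fun x hx => by nlinarith [sq_nonneg (f x + 2 * x * f' x)])
      _ = (1/2) * I + 2 * D0 := by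
          rw [intervalIntegral.integral_add ((hii _ hCsq 0 R le_rfl le_rfl hR.le).const_mul (1/2))
            ((hii _ hCD 0 R le_rfl le_rfl hR.le).const_mul 2),
            intervalIntegral.integral_const_mul, intervalIntegral.integral_const_mul]
  have hIa : I ≤ 2 * R * (f R) ^ 2 + 4 * D0 := by linarith
  -- Step 2: bound f(R)^2 by average
  have hfR : ∀ s ∈ Icc (R/2) R, (f R) ^ 2 ≤ (f s) ^ 2 + ((2/R) * I2 + (2/R) * D0) := by
    intro s hs
    have hs0 : (0:ℝ) ≤ s := le_trans hR2 hs.1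
    have hIccsub : Icc s R ⊆ Icc 0 R := Icc_subset_Icc hs0 le_rfl
    have hftc : (∫ t in s..R, 2 * f t * f' t) = (f R) ^ 2 - (f s) ^ 2 := by
      have hder : ∀ x ∈ uIcc s R, HasDerivAt (fun t => (f t) ^ 2) (2 * f x * f' x) x := by
        intro x hx
        rw [uIcc_of_le hs.2] at hx
        have h0 := (hd x (hIccsub hx)).pow 2
        norm_num at h0
        exact h0
      exact intervalIntegral.integral_eq_sub_of_hasDerivAt hder
        (hii _ ((continuousOn_const.mul hfc).mul hc) s R hs0 le_rfl hs.2)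
    have hmono : (∫ t in s..R, 2 * f t * f' t) ≤
        ∫ t in s..R, (2/R) * ((f t) ^ 2 + t ^ 2 * (f' t) ^ 2) := by
      refine intervalIntegral.integral_mono_on hs.2
        (hii _ ((continuousOn_const.mul hfc).mul hc) s R hs0 le_rfl hs.2)
        (hii _ (continuousOn_const.mul (hCsq.add hCD)) s R hs0 le_rfl hs.2) ?_
      intro t ht
      have ht1 : R / 2 ≤ t := le_trans hs.1 ht.1
      rw [div_mul_eq_mul_div, le_div_iff₀ hR]
      nlinarith [sq_nonneg (2 * f t - R * f' t),
        mul_nonneg (sub_nonneg.2 (show R ^ 2 / 4 ≤ t ^ 2 by nlinarith)) (sq_nonneg (f' t))]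
    have hsplit2 : (∫ t in s..R, (2/R) * ((f t) ^ 2 + t ^ 2 * (f' t) ^ 2))
        = (2/R) * ((∫ t in s..R, (f t) ^ 2) + ∫ t in s..R, t ^ 2 * (f' t) ^ 2) := by
      rw [intervalIntegral.integral_const_mul, intervalIntegral.integral_add
        (hii _ hCsq s R hs0 le_rfl hs.2) (hii _ hCD s R hs0 le_rfl hs.2)]
    have hmonoI : (∫ t in s..R, (f t) ^ 2) ≤ I2 :=
      intervalIntegral.integral_mono_interval hs.1 hs.2 le_rfl
        (Filter.Eventually.of_forall (fun x => sq_nonneg _))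
        (hii _ hCsq (R/2) R hR2 le_rfl hhalf)
    have hmonoD : (∫ t in s..R, t ^ 2 * (f' t) ^ 2) ≤ D0 :=
      intervalIntegral.integral_mono_interval hs0 hs.2 le_rfl
        (Filter.Eventually.of_forall (fun x => by positivity))
        (hii _ hCD 0 R le_rfl le_rfl hR.le)
    have h2R : (0:ℝ) ≤ 2 / R := by positivity
    have hmul := mul_le_mul_of_nonneg_left (add_le_add hmonoI hmonoD) h2R
    have hdist : (2/R) * (I2 + D0) = (2/R) * I2 + (2/R) * D0 := by ring
    linarith [hftc, hmono, hsplit2, hmul, hdist]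
  have hfR2 : R * (f R) ^ 2 ≤ 4 * I2 + 2 * D0 := by
    have hconst : (∫ _ in (R/2)..R, (f R) ^ 2) = (R - R/2) * (f R) ^ 2 := by
      rw [intervalIntegral.integral_const, smul_eq_mul]
    have hmono := intervalIntegral.integral_mono_on hhalf intervalIntegrable_const
      ((hii _ hCsq (R/2) R hR2 le_rfl hhalf).add intervalIntegrable_const)
      (fun s hs => hfR s hs)
    rw [hconst] at hmono
    have hsplit3 : (∫ s in (R/2)..R, ((f s) ^ 2 + ((2/R) * I2 + (2/R) * D0)))
        = I2 + (R - R/2) * ((2/R) * I2 + (2/R) * D0) := by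
      rw [intervalIntegral.integral_add (hii _ hCsq (R/2) R hR2 le_rfl hhalf)
        intervalIntegrable_const, intervalIntegral.integral_const, smul_eq_mul]
    have he : (R - R/2) * ((2/R) * I2 + (2/R) * D0) = I2 + D0 := by field_simp; ring
    have he2 : (R - R/2) * (f R) ^ 2 = (R * (f R) ^ 2) / 2 := by ring
    rw [hsplit3, he, he2] at hmono
    linarith
  -- Step 3: I2 ≤ K^(1/3)
  have hI2K : I2 ≤ max 1 (Real.log 2) * K ^ ((1:ℝ)/3) := by
    refine opt hK0 (Real.log_nonneg one_le_two) (fun l hl => ?_)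
    have hC1t : ContinuousOn (fun t : ℝ => 1 / t) (Icc (R/2) R) :=
      continuousOn_const.div continuousOn_id
        (fun x hx => (lt_of_lt_of_le (by linarith) hx.1).ne')
    have hmono : I2 ≤ ∫ t in (R/2)..R,
        ((1 / (3 * l ^ 2)) * (t ^ 2 * (f t) ^ 6) + (2 * l / 3) * (1 / t)) := by
      refine intervalIntegral.integral_mono_on hhalf
        (hii _ hCsq (R/2) R hR2 le_rfl hhalf)
        (((continuousOn_const.mul (hCK.mono (Icc_subset_Icc hR2 le_rfl))).add
          (continuousOn_const.mul hC1t)).intervalIntegrable_of_Icc hhalf) ?_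
      intro t ht
      have ht0 : (0:ℝ) < t := lt_of_lt_of_le (by linarith) ht.1
      have h := cube_amgm (mul_nonneg ht0.le (sq_nonneg (f t))) hl.le
      have hexp : (t * (f t) ^ 2) ^ 3 = t ^ 3 * (f t) ^ 6 := by ring
      rw [hexp] at h
      rw [← mul_le_mul_iff_of_pos_right (show (0:ℝ) < 3 * l ^ 2 * t by positivity)]
      have he : ((1 / (3 * l ^ 2)) * (t ^ 2 * (f t) ^ 6) + (2 * l / 3) * (1 / t)) * (3 * l ^ 2 * t)
          = t ^ 3 * (f t) ^ 6 + 2 * l ^ 3 := by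
        field_simp
      rw [he]
      nlinarith [h]
    have hsplit4 : (∫ t in (R/2)..R,
        ((1 / (3 * l ^ 2)) * (t ^ 2 * (f t) ^ 6) + (2 * l / 3) * (1 / t)))
        = (1 / (3 * l ^ 2)) * (∫ t in (R/2)..R, t ^ 2 * (f t) ^ 6)
          + (2 * l / 3) * (∫ t in (R/2)..R, 1 / t) := by
      rw [intervalIntegral.integral_add
        ((hii _ hCK (R/2) R hR2 le_rfl hhalf).const_mul _)
        ((hC1t.intervalIntegrable_of_Icc hhalf).const_mul _),
        intervalIntegral.integral_const_mul, intervalIntegral.integral_const_mul]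
    have hlog : (∫ t in (R/2)..R, 1 / t) = Real.log 2 := by
      rw [integral_one_div]
      · congr 1
        field_simp
      · rw [uIcc_of_le hhalf]
        intro hmem
        have := (mem_Icc.1 hmem).1
        linarith
    have hmonoK : (∫ t in (R/2)..R, t ^ 2 * (f t) ^ 6) ≤ K :=
      intervalIntegral.integral_mono_interval hR2 hhalf le_rfl
        (Filter.Eventually.of_forall (fun x => by positivity))
        (hii _ hCK 0 R le_rfl le_rfl hR.le)
    have hpos : (0:ℝ) ≤ 1 / (3 * l ^ 2) := by positivity
    have hmul := mul_le_mul_of_nonneg_left hmonoK hpos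
    have hr1 : K / (3 * l ^ 2) = (1 / (3 * l ^ 2)) * K := by ring
    have hr2 : Real.log 2 * (2 * l / 3) = (2 * l / 3) * Real.log 2 := by ring
    rw [hr1, hr2]
    rw [hsplit4, hlog] at hmono
    linarith
  have hmax : max 1 (Real.log 2) = 1 := by
    refine max_eq_left ?_
    have := Real.log_two_lt_d9
    linarith
  rw [hmax, one_mul] at hI2K
  have hK130 : (0:ℝ) ≤ K ^ ((1:ℝ)/3) := Real.rpow_nonneg hK0 _
  linarith

lemma volumeIoiPow_integral (f : ℝ → ℝ) :
    (∫ r : Ioi (0:ℝ), f r.1 ∂(Measure.volumeIoiPow 2)) = ∫ r in Ioi (0:ℝ), r ^ 2 • f r := by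
  simp only [Measure.volumeIoiPow, ENNReal.ofReal]
  rw [integral_withDensity_eq_integral_smul
    (f := fun r : Ioi (0:ℝ) => Real.toNNReal (r.1 ^ 2))
    ((measurable_subtype_coe.pow_const _).real_toNNReal) _,
    integral_subtype_comap measurableSet_Ioi (fun a : ℝ => Real.toNNReal (a ^ 2) • f a)]
  refine setIntegral_congr_fun measurableSet_Ioi (fun x hx => ?_)
  rw [NNReal.smul_def, Real.coe_toNNReal _ (pow_nonneg hx.out.le _)]

lemma polar_aux (g : E3 → ℝ) (hg : Integrable g (volume : Measure E3)) :
    ((∫ x, g x) = ∫ ω : Metric.sphere (0:E3) 1,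
        (∫ r in Ioi (0:ℝ), r ^ 2 • g (r • (ω : E3))) ∂((volume : Measure E3).toSphere)) ∧
      Integrable (fun ω : Metric.sphere (0:E3) 1 =>
        ∫ r in Ioi (0:ℝ), r ^ 2 • g (r • (ω : E3))) ((volume : Measure E3).toSphere) := by
  set μ : Measure E3 := volume with hμ
  set σ := μ.toSphere with hσ
  set ν2 := Measure.volumeIoiPow 2 with hν2
  have hdim : Module.finrank ℝ E3 = 3 := finrank_euclideanSpace_fin
  have hmp : MeasurePreserving (homeomorphUnitSphereProd E3) (μ.comap Subtype.val)
      (σ.prod ν2) := by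
    have h := μ.measurePreserving_homeomorphUnitSphereProd
    rw [hdim] at h
    exact h
  set h : Metric.sphere (0:E3) 1 × Ioi (0:ℝ) → ℝ := fun p => g (p.2.1 • (p.1.1 : E3)) with hh
  have hcomp : (fun x : ({0}ᶜ : Set E3) => g x.1) = h ∘ (homeomorphUnitSphereProd E3) := by
    funext x
    have hx0 : (x : E3) ≠ 0 := Set.mem_compl_singleton_iff.1 x.2
    simp only [Function.comp_apply, hh, homeomorphUnitSphereProd_apply_snd_coe,
      homeomorphUnitSphereProd_apply_fst_coe]
    rw [smul_inv_smul₀ (norm_ne_zero_iff.2 hx0)]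
  have hint0 : Integrable (fun x : ({0}ᶜ : Set E3) => g x.1) (μ.comap Subtype.val) := by
    have hemb := MeasurableEmbedding.subtype_coe ((measurableSet_singleton (0:E3)).compl)
    have : Integrable (g ∘ (Subtype.val : ({0}ᶜ : Set E3) → E3)) (μ.comap Subtype.val) := by
      rw [← hemb.integrable_map_iff,
        map_comap_subtype_coe ((measurableSet_singleton (0:E3)).compl),
        restrict_compl_singleton]
      exact hg
    exact this
  have hinth : Integrable h (σ.prod ν2) := by
    refine (hmp.integrable_comp_emb (Homeomorph.measurableEmbedding _)).1 ?_
    rw [← hcomp]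
    exact hint0
  have heq1 : (∫ x, g x ∂μ) = ∫ x : ({0}ᶜ : Set E3), g x.1 ∂(μ.comap Subtype.val) := by
    rw [integral_subtype_comap ((measurableSet_singleton (0:E3)).compl) g,
      restrict_compl_singleton]
  have heq2 : (∫ x : ({0}ᶜ : Set E3), g x.1 ∂(μ.comap Subtype.val)) = ∫ p, h p ∂(σ.prod ν2) := by
    rw [hcomp]
    exact hmp.integral_comp (Homeomorph.measurableEmbedding _) h
  have hinner : ∀ ω : Metric.sphere (0:E3) 1,
      (∫ r : Ioi (0:ℝ), h (ω, r) ∂ν2) = ∫ r in Ioi (0:ℝ), r ^ 2 • g (r • (ω : E3)) :=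
    fun ω => volumeIoiPow_integral (fun t => g (t • (ω : E3)))
  constructor
  · rw [heq1, heq2, integral_prod h hinth]
    exact integral_congr_ae (Filter.Eventually.of_forall (fun ω => hinner ω))
  · have hint2 := hinth.integral_prod_left
    have hfe : (fun ω : Metric.sphere (0:E3) 1 => ∫ r : Ioi (0:ℝ), h (ω, r) ∂ν2)
        = fun ω : Metric.sphere (0:E3) 1 => ∫ r in Ioi (0:ℝ), r ^ 2 • g (r • (ω : E3)) := funext hinner
    rwa [hfe] at hint2

end Statement4Aux

open Statement4Aux

set_option maxHeartbeats 1600000 in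
/-- Hardy inequality on a ball, Lemma 3.1(ii). -/
theorem statement4 :
    ∃ C₀ : ℝ, 0 < C₀ ∧
      ∀ (R : ℝ), 0 < R →
        ∀ (u : E3 → ℝ) (V : Set E3), IsOpen V → Metric.closedBall (0 : E3) R ⊆ V →
          ContDiffOn ℝ 1 u V →
          (∫ x in Metric.ball (0 : E3) R, (u x) ^ 2 / ‖x‖ ^ 2) ≤
            C₀ * ((∫ x in Metric.ball (0 : E3) R, (radialDeriv u x) ^ 2) +
              (∫ x in Metric.ball (0 : E3) R, |u x| ^ 6) ^ ((1 : ℝ) / 3)) := by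
  classical
  set σ := (volume : Measure E3).toSphere with hσdef
  set m : ℝ := (σ univ).toReal with hmdef
  have hm0 : (0:ℝ) ≤ m := ENNReal.toReal_nonneg
  refine ⟨8 + 8 * max 1 m, by positivity, ?_⟩
  intro R hR u V hV hVR hu
  set B := Metric.ball (0:E3) R with hBdef
  have hD0 : (0:ℝ) ≤ ∫ x in B, (radialDeriv u x) ^ 2 := integral_nonneg (fun x => sq_nonneg _)
  have hS0 : (0:ℝ) ≤ ∫ x in B, |u x| ^ 6 := integral_nonneg (fun x => by positivity)
  have hS130 : (0:ℝ) ≤ (∫ x in B, |u x| ^ 6) ^ ((1:ℝ)/3) := Real.rpow_nonneg hS0 _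
  by_cases hInt1 : IntegrableOn (fun x => u x ^ 2 / ‖x‖ ^ 2) B volume
  swap
  · rw [integral_undef hInt1]
    exact mul_nonneg (by positivity) (add_nonneg hD0 hS130)
  -- basic regularity facts
  have hBV : B ⊆ V := Metric.ball_subset_closedBall.trans hVR
  have hucV : ContinuousOn u V := hu.continuousOn
  have hdiff : ∀ x ∈ V, DifferentiableAt ℝ u x := fun x hx =>
    (hu.contDiffAt (hV.mem_nhds hx)).differentiableAt one_ne_zero
  have hgradc : ContinuousOn (fun x => gradient u x) V := by
    have h1 := hu.continuousOn_fderiv_of_isOpen hV le_rfl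
    exact (InnerProductSpace.toDual ℝ E3).symm.continuous.comp_continuousOn h1
  have hkey : ∀ (x y : E3), (fderiv ℝ u x) y = inner ℝ (gradient u x) y := by
    intro x y
    have h : (fderiv ℝ u x) = InnerProductSpace.toDual ℝ E3 (gradient u x) :=
      ((InnerProductSpace.toDual ℝ E3).apply_symm_apply (fderiv ℝ u x)).symm
    rw [h, InnerProductSpace.toDual_apply_apply]
  obtain ⟨M, hM⟩ := (isCompact_closedBall (0:E3) R).exists_bound_of_continuousOn
    (hucV.mono hVR)
  obtain ⟨M', hM'⟩ := (isCompact_closedBall (0:E3) R).exists_bound_of_continuousOn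
    (hgradc.mono hVR)
  have hM'0 : (0:ℝ) ≤ M' := le_trans (norm_nonneg _) (hM' 0 (Metric.mem_closedBall_self hR.le))
  have hM0 : (0:ℝ) ≤ M := le_trans (norm_nonneg _) (hM 0 (Metric.mem_closedBall_self hR.le))
  have hunit : ∀ x : E3, ‖(‖x‖⁻¹ • x : E3)‖ ≤ 1 := by
    intro x
    rcases eq_or_ne x 0 with rfl | hx
    · simp
    · rw [norm_smul, norm_inv, norm_norm, inv_mul_cancel₀ (norm_ne_zero_iff.2 hx)]
  have hrd_bound : ∀ x ∈ Metric.closedBall (0:E3) R, |radialDeriv u x| ≤ M' := by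
    intro x hx
    calc |radialDeriv u x| ≤ ‖(‖x‖⁻¹ • x : E3)‖ * ‖gradient u x‖ := abs_real_inner_le_norm _ _
    _ ≤ 1 * M' := mul_le_mul (hunit x) (hM' x hx) (norm_nonneg _) zero_le_one
    _ = M' := one_mul _
  -- integrability of indicator functions
  have hg1 : Integrable (B.indicator fun x => u x ^ 2 / ‖x‖ ^ 2) volume :=
    hInt1.integrable_indicator measurableSet_ball
  have hrd_meas : AEStronglyMeasurable (fun x => radialDeriv u x) (volume.restrict B) := by
    have h1 : AEStronglyMeasurable (fun x : E3 => ((‖x‖)⁻¹ • x : E3)) (volume.restrict B) :=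
      ((measurable_norm.inv).smul measurable_id).aestronglyMeasurable
    have h2 : AEStronglyMeasurable (fun x => gradient u x) (volume.restrict B) :=
      (hgradc.mono hBV).aestronglyMeasurable measurableSet_ball
    exact h1.inner h2
  have hg2' : IntegrableOn (fun x => (radialDeriv u x) ^ 2) B volume := by
    refine Integrable.mono' (g := fun _ => M' ^ 2)
      (integrableOn_const measure_ball_lt_top.ne) (hrd_meas.pow 2) ?_
    filter_upwards [ae_restrict_mem measurableSet_ball] with x hx
    have h1 := hrd_bound x (Metric.ball_subset_closedBall hx)
    rw [Real.norm_eq_abs, abs_pow]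
    exact pow_le_pow_left₀ (abs_nonneg _) h1 2
  have hg3' : IntegrableOn (fun x => |u x| ^ 6) B volume := by
    refine Integrable.mono' (g := fun _ => M ^ 6)
      (integrableOn_const measure_ball_lt_top.ne)
      (((hucV.mono hBV).abs.pow 6).aestronglyMeasurable measurableSet_ball) ?_
    filter_upwards [ae_restrict_mem measurableSet_ball] with x hx
    have h1 : |u x| ≤ M := by
      have := hM x (Metric.ball_subset_closedBall hx)
      rwa [Real.norm_eq_abs] at this
    rw [Real.norm_eq_abs, abs_pow, abs_abs]
    exact pow_le_pow_left₀ (abs_nonneg _) h1 6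
  have hg2 : Integrable (B.indicator fun x => (radialDeriv u x) ^ 2) volume :=
    hg2'.integrable_indicator measurableSet_ball
  have hg3 : Integrable (B.indicator fun x => |u x| ^ 6) volume :=
    hg3'.integrable_indicator measurableSet_ball
  obtain ⟨hA_eq, hA_int⟩ := polar_aux _ hg1
  obtain ⟨hD_eq, hD_int⟩ := polar_aux _ hg2
  obtain ⟨hS_eq, hS_int⟩ := polar_aux _ hg3
  -- simplification of the inner radial integrals
  have hnrm : ∀ (ω : Metric.sphere (0:E3) 1) (r : ℝ), 0 < r → ‖(r • (ω:E3) : E3)‖ = r := by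
    intro ω r hr
    rw [norm_smul, mem_sphere_zero_iff_norm.1 ω.2, mul_one, Real.norm_eq_abs, abs_of_pos hr]
  have hsimp : ∀ (φ : E3 → ℝ) (ω : Metric.sphere (0:E3) 1),
      (∫ r in Ioi (0:ℝ), r ^ 2 • (B.indicator φ) (r • (ω:E3)))
        = ∫ r in Ioo (0:ℝ) R, r ^ 2 * φ (r • (ω:E3)) := by
    intro φ ω
    have hcong : ∀ r ∈ Ioi (0:ℝ), r ^ 2 • (B.indicator φ) (r • (ω:E3))
        = (Ioo (0:ℝ) R).indicator (fun r => r ^ 2 * φ (r • (ω:E3))) r := by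
      intro r hr
      by_cases hrR : r < R
      · have hmem : (r • (ω:E3) : E3) ∈ B := by
          rw [hBdef, mem_ball_zero_iff, hnrm ω r hr]
          exact hrR
        rw [Set.indicator_of_mem hmem φ,
          Set.indicator_of_mem (show r ∈ Ioo (0:ℝ) R from ⟨hr, hrR⟩), smul_eq_mul]
      · have hnot : (r • (ω:E3) : E3) ∉ B := by
          rw [hBdef, mem_ball_zero_iff, hnrm ω r hr]
          exact fun h => hrR h
        rw [Set.indicator_of_notMem hnot,
          Set.indicator_of_notMem (fun hmem => hrR hmem.2), smul_zero]
    rw [setIntegral_congr_fun measurableSet_Ioi hcong, setIntegral_indicator measurableSet_Ioo,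
      Set.inter_eq_right.2 Ioo_subset_Ioi_self]
  -- the three polar identities
  have hA2 : (∫ x in B, u x ^ 2 / ‖x‖ ^ 2)
      = ∫ ω : Metric.sphere (0:E3) 1, (∫ r in Ioo (0:ℝ) R, (u (r • (ω:E3))) ^ 2) ∂σ := by
    rw [← integral_indicator measurableSet_ball, hA_eq]
    refine integral_congr_ae (Filter.Eventually.of_forall (fun ω => ?_))
    dsimp only
    rw [hsimp]
    refine setIntegral_congr_fun measurableSet_Ioo (fun r hr => ?_)
    rw [hnrm ω r hr.1]
    have h2 : r ^ 2 ≠ 0 := pow_ne_zero _ hr.1.ne'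
    field_simp
    exact mul_div_cancel_left₀ _ hr.1.ne'
  have hD2 : (∫ x in B, (radialDeriv u x) ^ 2)
      = ∫ ω : Metric.sphere (0:E3) 1,
        (∫ r in Ioo (0:ℝ) R, r ^ 2 * (radialDeriv u (r • (ω:E3))) ^ 2) ∂σ := by
    rw [← integral_indicator measurableSet_ball, hD_eq]
    exact integral_congr_ae (Filter.Eventually.of_forall (fun ω => hsimp _ ω))
  have hS2 : (∫ x in B, |u x| ^ 6)
      = ∫ ω : Metric.sphere (0:E3) 1,
        (∫ r in Ioo (0:ℝ) R, r ^ 2 * |u (r • (ω:E3))| ^ 6) ∂σ := by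
    rw [← integral_indicator measurableSet_ball, hS_eq]
    exact integral_congr_ae (Filter.Eventually.of_forall (fun ω => hsimp _ ω))
  -- transferred integrability
  have hD_int2 : Integrable (fun ω : Metric.sphere (0:E3) 1 =>
      ∫ r in Ioo (0:ℝ) R, r ^ 2 * (radialDeriv u (r • (ω:E3))) ^ 2) σ :=
    hD_int.congr (Filter.Eventually.of_forall (fun ω => hsimp _ ω))
  have hK_int2 : Integrable (fun ω : Metric.sphere (0:E3) 1 =>
      ∫ r in Ioo (0:ℝ) R, r ^ 2 * |u (r • (ω:E3))| ^ 6) σ :=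
    hS_int.congr (Filter.Eventually.of_forall (fun ω => hsimp _ ω))
  have hKW0 : ∀ ω : Metric.sphere (0:E3) 1,
      (0:ℝ) ≤ ∫ r in Ioo (0:ℝ) R, r ^ 2 * |u (r • (ω:E3))| ^ 6 :=
    fun ω => integral_nonneg (fun r => by positivity)
  -- per-direction Hardy inequality
  have hineq : ∀ ω : Metric.sphere (0:E3) 1,
      (∫ r in Ioo (0:ℝ) R, (u (r • (ω:E3))) ^ 2)
        ≤ 8 * (∫ r in Ioo (0:ℝ) R, r ^ 2 * (radialDeriv u (r • (ω:E3))) ^ 2)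
          + 8 * (∫ r in Ioo (0:ℝ) R, r ^ 2 * |u (r • (ω:E3))| ^ 6) ^ ((1:ℝ)/3) := by
    intro ω
    have hmemV : ∀ r ∈ Icc (0:ℝ) R, (r • (ω:E3) : E3) ∈ V := by
      intro r hrc
      apply hVR
      rw [mem_closedBall_zero_iff, norm_smul, mem_sphere_zero_iff_norm.1 ω.2, mul_one,
        Real.norm_eq_abs, abs_of_nonneg hrc.1]
      exact hrc.2
    have hd : ∀ r ∈ Icc (0:ℝ) R,
        HasDerivAt (fun t : ℝ => u (t • (ω:E3)))
          (inner ℝ ((ω:E3)) (gradient u (r • (ω:E3)))) r := by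
      intro r hrc
      have h1 : HasDerivAt (fun t : ℝ => t • (ω:E3)) ((1:ℝ) • (ω:E3)) r :=
        (hasDerivAt_id r).smul_const _
      have h2 : HasFDerivAt u (fderiv ℝ u (r • (ω:E3))) (r • (ω:E3)) :=
        (hdiff _ (hmemV r hrc)).hasFDerivAt
      have h3 := h2.comp_hasDerivAt r h1
      have h4 : (fderiv ℝ u (r • (ω:E3))) ((1:ℝ) • (ω:E3))
          = inner ℝ ((ω:E3)) (gradient u (r • (ω:E3))) := by
        rw [one_smul, hkey, real_inner_comm]
      rw [h4] at h3
      exact h3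
    have hcf' : ContinuousOn (fun r : ℝ => (inner ℝ ((ω:E3)) (gradient u (r • (ω:E3))) : ℝ))
        (Icc 0 R) := by
      have h1 : ContinuousOn (fun r : ℝ => gradient u (r • (ω:E3))) (Icc 0 R) :=
        hgradc.comp ((continuous_id.smul continuous_const).continuousOn) hmemV
      exact continuousOn_const.inner h1
    have h1d := oneD hR hd hcf'
    have conv : ∀ (g : ℝ → ℝ), (∫ r in (0:ℝ)..R, g r) = ∫ r in Ioo (0:ℝ) R, g r := by
      intro g
      rw [intervalIntegral.integral_of_le hR.le, integral_Ioc_eq_integral_Ioo]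
    rw [conv, conv, conv] at h1d
    have e2 : (∫ r in Ioo (0:ℝ) R, r ^ 2 * (inner ℝ ((ω:E3)) (gradient u (r • (ω:E3))) : ℝ) ^ 2)
        = ∫ r in Ioo (0:ℝ) R, r ^ 2 * (radialDeriv u (r • (ω:E3))) ^ 2 := by
      refine setIntegral_congr_fun measurableSet_Ioo (fun r hr => ?_)
      have hrd : radialDeriv u (r • (ω:E3)) = inner ℝ ((ω:E3)) (gradient u (r • (ω:E3))) := by
        rw [radialDeriv, hnrm ω r hr.1, smul_smul, inv_mul_cancel₀ hr.1.ne', one_smul]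
      rw [hrd]
    have e3 : (∫ r in Ioo (0:ℝ) R, r ^ 2 * (u (r • (ω:E3))) ^ 6)
        = ∫ r in Ioo (0:ℝ) R, r ^ 2 * |u (r • (ω:E3))| ^ 6 := by
      refine setIntegral_congr_fun measurableSet_Ioo (fun r hr => ?_)
      have : |u (r • (ω:E3))| ^ 6 = (u (r • (ω:E3))) ^ 6 := by
        rw [← abs_pow]
        exact abs_of_nonneg (by positivity)
      rw [this]
    rw [e2, e3] at h1d
    exact h1d
  -- integrability of the cube root term
  have hrpow_cont : Continuous (fun t : ℝ => t ^ ((1:ℝ)/3)) := by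
    refine continuous_iff_continuousAt.2 (fun x => ?_)
    exact Real.continuousAt_rpow_const x _ (Or.inr (by norm_num))
  have hK13_meas : AEStronglyMeasurable (fun ω : Metric.sphere (0:E3) 1 =>
      (∫ r in Ioo (0:ℝ) R, r ^ 2 * |u (r • (ω:E3))| ^ 6) ^ ((1:ℝ)/3)) σ :=
    hrpow_cont.comp_aestronglyMeasurable hK_int2.aestronglyMeasurable
  have hK13_int : Integrable (fun ω : Metric.sphere (0:E3) 1 =>
      (∫ r in Ioo (0:ℝ) R, r ^ 2 * |u (r • (ω:E3))| ^ 6) ^ ((1:ℝ)/3)) σ := by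
    refine Integrable.mono' ((integrable_const (1:ℝ)).add hK_int2) hK13_meas ?_
    refine Filter.Eventually.of_forall (fun ω => ?_)
    simp only [Pi.add_apply]
    set K := ∫ r in Ioo (0:ℝ) R, r ^ 2 * |u (r • (ω:E3))| ^ 6 with hK
    have hK0 := hKW0 ω
    rw [Real.norm_eq_abs, abs_of_nonneg (Real.rpow_nonneg hK0 _)]
    rcases le_total K 1 with h1 | h1
    · have := Real.rpow_le_one hK0 h1 (by norm_num : (0:ℝ) ≤ 1/3)
      linarith
    · have h2 : K ^ ((1:ℝ)/3) ≤ K ^ (1:ℝ) :=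
        Real.rpow_le_rpow_of_exponent_le h1 (by norm_num)
      rw [Real.rpow_one] at h2
      linarith
  -- main chain
  calc (∫ x in B, u x ^ 2 / ‖x‖ ^ 2)
      = ∫ ω : Metric.sphere (0:E3) 1, (∫ r in Ioo (0:ℝ) R, (u (r • (ω:E3))) ^ 2) ∂σ := hA2
    _ ≤ ∫ ω : Metric.sphere (0:E3) 1,
        (8 * (∫ r in Ioo (0:ℝ) R, r ^ 2 * (radialDeriv u (r • (ω:E3))) ^ 2)
          + 8 * (∫ r in Ioo (0:ℝ) R, r ^ 2 * |u (r • (ω:E3))| ^ 6) ^ ((1:ℝ)/3)) ∂σ := by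
        refine integral_mono_of_nonneg
          (Filter.Eventually.of_forall (fun ω => integral_nonneg (fun r => sq_nonneg _)))
          ((hD_int2.const_mul 8).add (hK13_int.const_mul 8))
          (Filter.Eventually.of_forall (fun ω => hineq ω))
    _ = 8 * (∫ ω : Metric.sphere (0:E3) 1,
            (∫ r in Ioo (0:ℝ) R, r ^ 2 * (radialDeriv u (r • (ω:E3))) ^ 2) ∂σ)
        + 8 * (∫ ω : Metric.sphere (0:E3) 1,
            (∫ r in Ioo (0:ℝ) R, r ^ 2 * |u (r • (ω:E3))| ^ 6) ^ ((1:ℝ)/3) ∂σ) := by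
        rw [integral_add (hD_int2.const_mul 8) (hK13_int.const_mul 8),
          integral_const_mul, integral_const_mul]
    _ ≤ 8 * (∫ x in B, (radialDeriv u x) ^ 2)
        + 8 * (max 1 m * (∫ x in B, |u x| ^ 6) ^ ((1:ℝ)/3)) := by
        have h8 : (∫ ω : Metric.sphere (0:E3) 1,
            (∫ r in Ioo (0:ℝ) R, r ^ 2 * |u (r • (ω:E3))| ^ 6) ^ ((1:ℝ)/3) ∂σ)
            ≤ max 1 m * (∫ x in B, |u x| ^ 6) ^ ((1:ℝ)/3) := by
          rw [hS2]
          refine opt (by rw [← hS2]; exact hS0) hm0 (fun l hl => ?_)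
          calc (∫ ω : Metric.sphere (0:E3) 1,
              (∫ r in Ioo (0:ℝ) R, r ^ 2 * |u (r • (ω:E3))| ^ 6) ^ ((1:ℝ)/3) ∂σ)
              ≤ ∫ ω : Metric.sphere (0:E3) 1,
                ((∫ r in Ioo (0:ℝ) R, r ^ 2 * |u (r • (ω:E3))| ^ 6) / (3 * l ^ 2)
                  + 2 * l / 3) ∂σ :=
                integral_mono hK13_int ((hK_int2.div_const _).add (integrable_const _))
                  (fun ω => rpow_third_le (hKW0 ω) hl)
            _ = (∫ ω : Metric.sphere (0:E3) 1,
                  (∫ r in Ioo (0:ℝ) R, r ^ 2 * |u (r • (ω:E3))| ^ 6) ∂σ) / (3 * l ^ 2)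
                + m * (2 * l / 3) := by
                rw [integral_add (hK_int2.div_const _) (integrable_const _),
                  integral_div, integral_const, smul_eq_mul, hmdef, measureReal_def]
        rw [hD2]
        exact add_le_add le_rfl (mul_le_mul_of_nonneg_left h8 (by norm_num))
    _ ≤ (8 + 8 * max 1 m) * ((∫ x in B, (radialDeriv u x) ^ 2)
          + (∫ x in B, |u x| ^ 6) ^ ((1:ℝ)/3)) := by
        have hmax1 : (1:ℝ) ≤ max 1 m := le_max_left _ _
        nlinarith [hD0, hS130, hmax1]
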